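/- arXiv:quant-ph/0506039 — 2 statements merged into one kernel-verified Lean document; each statement's English description precedes it below -/
import Mathlib

section
/- Let A and B be finite nonempty sets, let (p_{ab})_{(a,b)∈A×B} be a probability distribution with marginal p_b := ∑_a p_{ab}, and assume p_b > 0 for every b ∈ B. Let ρ_{ab} be density matrices on ℂ^m for each (a,b), and let {|b⟩⟨b|}_{b∈B} denote the diagonal standard basis matrix units on ℂ^{|B|}. Then the Holevo information of the ensemble {p_{ab}, ρ_{ab} ⊗ |b⟩⟨b|} satisfies χ({p_{ab}, ρ_{ab} ⊗ |b⟩⟨b|}) = H((p_b)_b) + ∑_b p_b · χ({p_{ab}/p_b, ρ_{ab}}_{a∈A}). -/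
open scoped Kronecker BigOperators ComplexOrder

/-- Von Neumann entropy (base 2) of a matrix, via eigenvalues when Hermitian. -/
noncomputable def vNEntropy {n : Type*} [Fintype n] [DecidableEq n] (ρ : Matrix n n ℂ) : ℝ :=
  if h : ρ.IsHermitian then -∑ k, h.eigenvalues k * Real.logb 2 (h.eigenvalues k) else 0

/-- A density matrix: positive semidefinite with trace one. -/
def IsDensityMatrix {n : Type*} [Fintype n] [DecidableEq n] (ρ : Matrix n n ℂ) : Prop :=
  ρ.PosSemidef ∧ ρ.trace = 1

/-- Shannon entropy (base 2). -/
noncomputable def shannonH {I : Type*} [Fintype I] (p : I → ℝ) : ℝ :=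
  -∑ i, p i * Real.logb 2 (p i)

/-- Holevo information of an ensemble. -/
noncomputable def holevo {I n : Type*} [Fintype I] [Fintype n] [DecidableEq n]
    (p : I → ℝ) (ρ : I → Matrix n n ℂ) : ℝ :=
  vNEntropy (∑ i, (p i : ℂ) • ρ i) - ∑ i, p i * vNEntropy (ρ i)


open Polynomial

variable {n ι : Type*} [Fintype n] [DecidableEq n]

lemma my_charpoly_diagonal {R : Type*} [CommRing R] (d : n → R) :
    (Matrix.diagonal d).charpoly = ∏ i, (X - C (d i)) := by
  have h : Matrix.charmatrix (Matrix.diagonal d) = Matrix.diagonal (fun i => X - C (d i)) := by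
    ext i j
    by_cases hij : i = j <;> simp [Matrix.charmatrix_apply, Matrix.diagonal_apply, hij]
  rw [Matrix.charpoly, h, Matrix.det_diagonal]

lemma my_charpoly_conj {R : Type*} [CommRing R] (U A V : Matrix n n R)
    (hUV : U * V = 1) : (U * A * V).charpoly = A.charpoly := by
  have h1 : Matrix.charmatrix (U * A * V)
      = (C : R →+* R[X]).mapMatrix U * Matrix.charmatrix A * (C : R →+* R[X]).mapMatrix V := by
    rw [Matrix.charmatrix, Matrix.charmatrix]
    rw [Matrix.mul_sub, Matrix.sub_mul]
    congr 1
    · have hc : (Matrix.scalar n (X : R[X])) = (X : R[X]) • (1 : Matrix n n R[X]) := by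
        rw [Matrix.scalar_apply, Matrix.smul_one_eq_diagonal]
      rw [hc, Matrix.mul_smul, Matrix.smul_mul, mul_one, ← map_mul, hUV, map_one]
    · rw [map_mul, map_mul]
  have hdet : ((C : R →+* R[X]).mapMatrix U).det * ((C : R →+* R[X]).mapMatrix V).det = 1 := by
    rw [← Matrix.det_mul, ← map_mul, hUV, map_one, Matrix.det_one]
  rw [Matrix.charpoly, h1, Matrix.det_mul, Matrix.det_mul, Matrix.charpoly]
  rw [mul_comm, ← mul_assoc, mul_comm _ ((C : R →+* R[X]).mapMatrix U).det, hdet, one_mul]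

lemma my_charpoly_blockDiagonal {R o : Type*} [CommRing R] [Fintype o] [DecidableEq o]
    (M : o → Matrix n n R) :
    (Matrix.blockDiagonal M).charpoly = ∏ b, (M b).charpoly := by
  have h : Matrix.charmatrix (Matrix.blockDiagonal M)
      = Matrix.blockDiagonal (fun b => Matrix.charmatrix (M b)) := by
    ext ⟨i, b⟩ ⟨j, b'⟩
    simp only [Matrix.charmatrix_apply, Matrix.blockDiagonal_apply, Matrix.diagonal_apply,
      Prod.mk.injEq]
    by_cases h : b = b' <;> by_cases hij : i = j <;> simp [h, hij]
  rw [Matrix.charpoly, h, Matrix.det_blockDiagonal]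
  rfl

lemma my_charpoly_hermitian {A : Matrix n n ℂ} (hA : A.IsHermitian) :
    A.charpoly = ∏ i, (X - C ((hA.eigenvalues i : ℂ))) := by
  conv_lhs => rw [hA.spectral_theorem, Unitary.conjStarAlgAut_apply]
  rw [my_charpoly_conj _ _ _ ((Unitary.mem_iff.mp (hA.eigenvectorUnitary).2).2),
    my_charpoly_diagonal]
  rfl

lemma my_sum_eigenvalues {A : Matrix n n ℂ} (hA : A.IsHermitian) :
    (∑ i, (hA.eigenvalues i : ℂ)) = A.trace := by
  conv_rhs => rw [hA.spectral_theorem, Unitary.conjStarAlgAut_apply]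
  rw [Matrix.trace_mul_cycle, (Unitary.mem_iff.mp (hA.eigenvectorUnitary).2).1, one_mul,
    Matrix.trace_diagonal]
  rfl

lemma my_sum_g_eigenvalues [Fintype ι] {A : Matrix n n ℂ} (hA : A.IsHermitian)
    (g : ℝ → ℝ) (μ : ι → ℝ) (h : A.charpoly = ∏ i, (X - C ((μ i : ℂ)))) :
    ∑ k, g (hA.eigenvalues k) = ∑ i, g (μ i) := by
  have key : (Finset.univ.val.map fun k => ((hA.eigenvalues k : ℂ)))
      = Finset.univ.val.map fun i => ((μ i : ℂ)) := by
    have e1 := roots_multiset_prod_X_sub_C (Finset.univ.val.map fun k => ((hA.eigenvalues k : ℂ)))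
    have e2 := roots_multiset_prod_X_sub_C (Finset.univ.val.map fun i => ((μ i : ℂ)))
    rw [Multiset.map_map] at e1 e2
    rw [← e1, ← e2]
    congr 1
    have p1 : ((Finset.univ.val.map fun k => ((hA.eigenvalues k : ℂ))).map
        fun a => X - C a).prod = A.charpoly := by
      rw [Multiset.map_map, my_charpoly_hermitian hA, Finset.prod_eq_multiset_prod]
      rfl
    have p2 : ((Finset.univ.val.map fun i => ((μ i : ℂ))).map
        fun a => X - C a).prod = A.charpoly := by
      rw [Multiset.map_map, h, Finset.prod_eq_multiset_prod]
      rfl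
    rw [Multiset.map_map] at p1 p2
    rw [p1, p2]
  have s1 : ∑ k, g (hA.eigenvalues k)
      = ((Finset.univ.val.map fun k => ((hA.eigenvalues k : ℂ))).map fun z => g z.re).sum := by
    rw [Multiset.map_map, Finset.sum_eq_multiset_sum]
    simp [Function.comp]
  have s2 : ∑ i, g (μ i)
      = ((Finset.univ.val.map fun i => ((μ i : ℂ))).map fun z => g z.re).sum := by
    rw [Multiset.map_map, Finset.sum_eq_multiset_sum]
    simp [Function.comp]
  rw [s1, s2, key]


section helpers
variable {n : Type*} [Fintype n] [DecidableEq n]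

/-- vNEntropy via any proof of hermitian. -/
lemma vNEntropy_eq {A : Matrix n n ℂ} (hA : A.IsHermitian) :
    vNEntropy A = -∑ k, hA.eigenvalues k * Real.logb 2 (hA.eigenvalues k) := by
  rw [vNEntropy, dif_pos hA]

lemma isHermitian_blockDiagonal {o : Type*} [Fintype o] [DecidableEq o]
    (N : o → Matrix n n ℂ) (h : ∀ b, (N b).IsHermitian) :
    (Matrix.blockDiagonal N).IsHermitian := by
  show Matrix.conjTranspose (Matrix.blockDiagonal N) = Matrix.blockDiagonal N
  rw [Matrix.blockDiagonal_conjTranspose]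
  exact congrArg _ (funext fun b => (h b).eq)


end helpers

/-- Decomposition of the local Holevo information (Eq. (chibob) of the paper):
`χ({p_{ab}, ρ_{ab} ⊗ |b⟩⟨b|}) = H({p_b}) + ∑ b, p_b * χ({p_{ab}/p_b, ρ_{ab}})`. -/
theorem stmt4 {A B : Type} [Fintype A] [Nonempty A] [Fintype B] [DecidableEq B] [Nonempty B]
    (m : ℕ) (p : A × B → ℝ) (hp : ∀ ab, 0 ≤ p ab) (hp1 : ∑ ab, p ab = 1)
    (pB : B → ℝ) (hpB : ∀ b, pB b = ∑ a, p (a, b)) (hpBpos : ∀ b, 0 < pB b)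
    (ρ : A × B → Matrix (Fin m) (Fin m) ℂ) (hρ : ∀ ab, IsDensityMatrix (ρ ab)) :
    holevo p (fun ab => ρ ab ⊗ₖ Matrix.single ab.2 ab.2 (1 : ℂ)) =
      shannonH pB + ∑ b, pB b * holevo (fun a => p (a, b) / pB b) (fun a => ρ (a, b)) := by
  classical
  set g : ℝ → ℝ := fun x => x * Real.logb 2 x with hgdef
  have hg0 : g 0 = 0 := by simp [hgdef]
  have hgmul : ∀ x y : ℝ, x ≠ 0 → g (x * y) = y * g x + x * g y := by
    intro x y hx
    by_cases hy : y = 0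
    · simp [hy, hgdef]
    · simp only [hgdef]
      rw [Real.logb_mul hx hy]
      ring
  -- Hermitian of the ρ's
  have hρH : ∀ ab, (ρ ab).IsHermitian := fun ab => (hρ ab).1.1
  -- the conditional averages
  set σ : B → Matrix (Fin m) (Fin m) ℂ :=
    fun b => ∑ a, ((p (a, b) / pB b : ℝ) : ℂ) • ρ (a, b) with hσdef
  have hσH : ∀ b, (σ b).IsHermitian := by
    intro b
    show Matrix.conjTranspose (σ b) = σ b
    rw [hσdef]
    rw [Matrix.conjTranspose_sum]
    refine Finset.sum_congr rfl fun a _ => ?_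
    rw [Matrix.conjTranspose_smul, (hρH (a, b)).eq]
    congr 1
    simp [Complex.star_def, Complex.conj_ofReal]
  set Mb : B → Matrix (Fin m) (Fin m) ℂ :=
    fun b => ∑ a, (p (a, b) : ℂ) • ρ (a, b) with hMbdef
  have hMb : ∀ b, Mb b = (pB b : ℂ) • σ b := by
    intro b
    rw [hMbdef, hσdef]
    simp only [Finset.smul_sum, smul_smul]
    refine Finset.sum_congr rfl fun a _ => ?_
    congr 1
    rw [← Complex.ofReal_mul, mul_comm, div_mul_cancel₀ _ (hpBpos b).ne']
  have hMbH : ∀ b, (Mb b).IsHermitian := by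
    intro b
    rw [hMb b]
    show Matrix.conjTranspose ((pB b : ℂ) • σ b) = (pB b : ℂ) • σ b
    rw [Matrix.conjTranspose_smul, (hσH b).eq]
    congr 1
    simp [Complex.star_def, Complex.conj_ofReal]
  -- trace of σ b is 1, hence sum of eigenvalues is 1
  have htrσ : ∀ b, (σ b).trace = 1 := by
    intro b
    rw [hσdef]
    simp only [Matrix.trace_sum, Matrix.trace_smul]
    have : ∀ a : A, ((p (a, b) / pB b : ℝ) : ℂ) • (ρ (a, b)).trace
        = ((p (a, b) / pB b : ℝ) : ℂ) := by
      intro a; rw [(hρ (a, b)).2, smul_eq_mul, mul_one]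
    rw [Finset.sum_congr rfl fun a _ => this a]
    rw [← Complex.ofReal_sum, ← Finset.sum_div, ← hpB b, div_self (hpBpos b).ne']
    norm_num
  have hsumeig : ∀ b, ∑ k, (hσH b).eigenvalues k = 1 := by
    intro b
    have := my_sum_eigenvalues (hσH b)
    rw [htrσ b] at this
    exact_mod_cast this
  -- charpoly of Mb b
  have hchMb : ∀ b, (Mb b).charpoly
      = ∏ k, (X - C ((pB b * (hσH b).eigenvalues k : ℝ) : ℂ)) := by
    intro b
    have hsp := (hσH b).spectral_theorem
    have : Mb b = (hσH b).eigenvectorUnitary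
        * Matrix.diagonal (fun k => ((pB b * (hσH b).eigenvalues k : ℝ) : ℂ))
        * (star ((hσH b).eigenvectorUnitary : Matrix (Fin m) (Fin m) ℂ)) := by
      rw [hMb b]
      conv_lhs => rw [hsp, Unitary.conjStarAlgAut_apply]
      have hd : Matrix.diagonal (fun k => ((pB b * (hσH b).eigenvalues k : ℝ) : ℂ))
          = (pB b : ℂ) • Matrix.diagonal (RCLike.ofReal ∘ (hσH b).eigenvalues) := by
        ext i j
        rcases eq_or_ne i j with rfl | hij
        · simp [Matrix.diagonal_apply, Complex.ofReal_mul]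
        · simp [Matrix.diagonal_apply, hij]
      rw [hd, mul_smul_comm, smul_mul_assoc]
    rw [this, my_charpoly_conj _ _ _ ((Unitary.mem_iff.mp ((hσH b).eigenvectorUnitary).2).2),
      my_charpoly_diagonal]
  -- the average state is block diagonal
  have hAvg : (∑ ab : A × B, (p ab : ℂ) • (ρ ab ⊗ₖ Matrix.single ab.2 ab.2 (1 : ℂ)))
      = Matrix.blockDiagonal Mb := by
    ext ⟨i, b1⟩ ⟨j, b2⟩
    simp only [Matrix.sum_apply, Matrix.smul_apply, Matrix.kroneckerMap_apply,
      Matrix.blockDiagonal_apply, Matrix.single, Matrix.of_apply, smul_eq_mul]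
    rw [Fintype.sum_prod_type_right]
    by_cases h : b1 = b2
    · subst h
      simp [hMbdef, Matrix.sum_apply, Matrix.smul_apply, and_self, mul_ite]
    · rw [if_neg h]
      refine Finset.sum_eq_zero fun b _ => Finset.sum_eq_zero fun a _ => ?_
      have hfalse : ¬(b = b1 ∧ b = b2) := fun hh => h (hh.1.symm.trans hh.2)
      simp [hfalse]
  -- entropy of the average state
  have hHavg : vNEntropy (Matrix.blockDiagonal Mb)
      = shannonH pB + ∑ b, pB b * vNEntropy (σ b) := by
    have hherm := isHermitian_blockDiagonal Mb hMbH
    rw [vNEntropy_eq hherm]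
    have hch : (Matrix.blockDiagonal Mb).charpoly
        = ∏ bk : B × Fin m, (X - C (((fun bk : B × Fin m =>
            pB bk.1 * (hσH bk.1).eigenvalues bk.2) bk : ℝ) : ℂ)) := by
      rw [my_charpoly_blockDiagonal, Fintype.prod_prod_type]
      exact Finset.prod_congr rfl fun b _ => hchMb b
    have := my_sum_g_eigenvalues hherm g _ hch
    rw [show (fun k => hherm.eigenvalues k * Real.logb 2 (hherm.eigenvalues k))
        = fun k => g (hherm.eigenvalues k) from rfl, this]
    rw [Fintype.sum_prod_type]
    have hsum : ∀ b : B, ∑ k, g (pB b * (hσH b).eigenvalues k)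
        = g (pB b) + pB b * ∑ k, g ((hσH b).eigenvalues k) := by
      intro b
      rw [Finset.sum_congr rfl fun k _ => hgmul (pB b) ((hσH b).eigenvalues k) (hpBpos b).ne']
      rw [Finset.sum_add_distrib, ← Finset.sum_mul, hsumeig b, one_mul, ← Finset.mul_sum]
    rw [Finset.sum_congr rfl fun b _ => hsum b, Finset.sum_add_distrib]
    rw [shannonH, neg_add]
    congr 1
    rw [← Finset.sum_neg_distrib]
    refine Finset.sum_congr rfl fun b _ => ?_
    rw [vNEntropy_eq (hσH b)]
    ring
  -- entropy of the kronecker states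
  have hkron : ∀ ab : A × B,
      vNEntropy (ρ ab ⊗ₖ Matrix.single ab.2 ab.2 (1 : ℂ)) = vNEntropy (ρ ab) := by
    rintro ⟨a, b⟩
    have hbd : (ρ (a, b) ⊗ₖ Matrix.single b b (1 : ℂ))
        = Matrix.blockDiagonal (fun b' => if b' = b then ρ (a, b) else 0) := by
      ext ⟨i, b1⟩ ⟨j, b2⟩
      simp only [Matrix.kroneckerMap_apply, Matrix.blockDiagonal_apply, Matrix.single,
        Matrix.of_apply]
      by_cases h : b1 = b2
      · subst h
        by_cases hb : b1 = b
        · subst hb; simp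
        · have hb' : b ≠ b1 := Ne.symm hb
          simp [hb, hb']
      · rw [if_neg h]
        have hfalse : ¬(b = b1 ∧ b = b2) := fun hh => h (hh.1.symm.trans hh.2)
        simp [hfalse]
    have hblkH : ∀ b' : B, (if b' = b then ρ (a, b) else (0 : Matrix (Fin m) (Fin m) ℂ)).IsHermitian := by
      intro b'
      by_cases hb : b' = b <;> simp [hb, hρH (a, b), Matrix.isHermitian_zero]
    have hherm := isHermitian_blockDiagonal _ hblkH
    rw [hbd, vNEntropy_eq hherm, vNEntropy_eq (hρH (a, b))]
    have hch : (Matrix.blockDiagonal (fun b' => if b' = b then ρ (a, b) else 0)).charpoly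
        = ∏ bk : B × Fin m, (X - C (((fun bk : B × Fin m =>
            if bk.1 = b then (hρH (a, b)).eigenvalues bk.2 else 0) bk : ℝ) : ℂ)) := by
      rw [my_charpoly_blockDiagonal, Fintype.prod_prod_type]
      refine Finset.prod_congr rfl fun b' _ => ?_
      by_cases hb : b' = b
      · simp only [hb, if_pos rfl]
        exact my_charpoly_hermitian (hρH (a, b))
      · simp only [if_neg hb]
        rw [← Matrix.diagonal_zero, my_charpoly_diagonal]
        simp
    have := my_sum_g_eigenvalues hherm g _ hch
    rw [show (fun k => hherm.eigenvalues k * Real.logb 2 (hherm.eigenvalues k))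
        = fun k => g (hherm.eigenvalues k) from rfl, this]
    rw [Fintype.sum_prod_type]
    rw [Fintype.sum_eq_single b ?_]
    · simp [hgdef]
    · intro b' hb'
      refine Finset.sum_eq_zero fun k _ => ?_
      simp [hb', hg0]
  -- put everything together
  rw [holevo, hAvg, hHavg]
  rw [Finset.sum_congr rfl fun ab _ => congrArg (p ab * ·) (hkron ab)]
  have hR : ∀ b : B, holevo (fun a => p (a, b) / pB b) (fun a => ρ (a, b))
      = vNEntropy (σ b) - ∑ a, p (a, b) / pB b * vNEntropy (ρ (a, b)) := fun b => rfl
  rw [Finset.sum_congr rfl fun b _ => congrArg (pB b * ·) (hR b)]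
  have : ∀ b : B, pB b * (vNEntropy (σ b) - ∑ a, p (a, b) / pB b * vNEntropy (ρ (a, b)))
      = pB b * vNEntropy (σ b) - ∑ a, p (a, b) * vNEntropy (ρ (a, b)) := by
    intro b
    rw [mul_sub, Finset.mul_sum]
    congr 1
    refine Finset.sum_congr rfl fun a _ => ?_
    rw [← mul_assoc, mul_comm (pB b), div_mul_cancel₀ _ (hpBpos b).ne']
  rw [Finset.sum_congr rfl fun b _ => this b, Finset.sum_sub_distrib]
  rw [Fintype.sum_prod_type_right]
  ring
end

section
/- Let A, B, A', B' be finite nonempty sets, let (p_{ab})_{(a,b)∈A×B} be a probability distribution, and for each (a,b) let (q_{a'b'|ab})_{(a',b')∈A'×B'} be a probability distribution. Define m_{b'|ab} := ∑_{a'} q_{a'b'|ab} and the joint distribution P(a,b,b') := p_{ab} · m_{b'|ab}. Let {|b⟩⟨b|}_{b∈B} and {|b'⟩⟨b'|}_{b'∈B'} denote diagonal standard basis matrix units on ℂ^{|B|} and ℂ^{|B'|}. Then χ({p_{ab}, |b⟩⟨b| ⊗ ∑_{b'} m_{b'|ab} |b'⟩⟨b'|}) − χ({p_{ab}, |b⟩⟨b|})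 = I(A;B'|B), where I(A;B'|B) := H(B'|B) − H(B'|A,B) is the conditional mutual information of P, with H(B'|B) := H(P_{B,B'}) − H(P_B) and H(B'|A,B) := H(P) − H(P_{A,B}) in terms of Shannon entropies of the indicated marginals of P. -/
open scoped Kronecker BigOperators ComplexOrder

open Polynomial in
lemma eig_multiset_diagonal {n : Type*} [Fintype n] [DecidableEq n]
    (d : n → ℝ) (h : (Matrix.diagonal (fun i => (d i : ℂ))).IsHermitian) :
    Finset.univ.val.map h.eigenvalues = Finset.univ.val.map d := by
  have key : ∏ i, (X - C ((d i : ℂ))) = ∏ i, (X - C ((h.eigenvalues i : ℂ))) := by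
    apply Polynomial.funext
    intro t
    simp only [Polynomial.eval_prod, Polynomial.eval_sub, Polynomial.eval_X, Polynomial.eval_C]
    have h1 : ∀ (g : n → ℂ), ∏ i, (t - g i)
        = Matrix.det (t • (1 : Matrix n n ℂ) - Matrix.diagonal g) := by
      intro g
      rw [Matrix.smul_one_eq_diagonal, Matrix.diagonal_sub, Matrix.det_diagonal]
    rw [h1, h1]
    set U : Matrix n n ℂ := (Matrix.IsHermitian.eigenvectorUnitary h : Matrix n n ℂ) with hU
    have hUU : U * star U = 1 := (Matrix.mem_unitaryGroup_iff).mp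
      (Matrix.IsHermitian.eigenvectorUnitary h).2
    have h2 : t • (1 : Matrix n n ℂ) - Matrix.diagonal (fun i => (d i : ℂ))
        = U * (t • (1 : Matrix n n ℂ) - Matrix.diagonal (RCLike.ofReal ∘ h.eigenvalues)) * star U := by
      rw [Matrix.mul_sub, Matrix.sub_mul]
      nth_rewrite 1 [Matrix.IsHermitian.spectral_theorem h]
      congr 1
      rw [Matrix.mul_smul, mul_one, Matrix.smul_mul, hUU]
    rw [h2, Matrix.det_mul_right_comm, hUU, one_mul]
    rfl
  have hroots := congrArg Polynomial.roots key
  rw [Finset.prod_eq_multiset_prod, Finset.prod_eq_multiset_prod,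
    show (Finset.univ.val.map fun i => X - C ((d i : ℂ)))
      = (Finset.univ.val.map fun i => ((d i : ℂ))).map (fun a => X - C a) by rw [Multiset.map_map]; rfl,
    show (Finset.univ.val.map fun i => X - C ((h.eigenvalues i : ℂ)))
      = (Finset.univ.val.map fun i => ((h.eigenvalues i : ℂ))).map (fun a => X - C a) by rw [Multiset.map_map]; rfl,
    Polynomial.roots_multiset_prod_X_sub_C, Polynomial.roots_multiset_prod_X_sub_C] at hroots
  have : Multiset.map (fun x : ℝ => (x : ℂ)) (Finset.univ.val.map h.eigenvalues)
      = Multiset.map (fun x : ℝ => (x : ℂ)) (Finset.univ.val.map d) := by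
    rw [Multiset.map_map, Multiset.map_map]
    exact hroots.symm
  exact Multiset.map_injective Complex.ofReal_injective this

lemma sum_f_eigenvalues_diagonal {n : Type*} [Fintype n] [DecidableEq n]
    (d : n → ℝ) (h : (Matrix.diagonal (fun i => (d i : ℝ) : n → ℂ)).IsHermitian) (f : ℝ → ℝ) :
    ∑ k, f (h.eigenvalues k) = ∑ k, f (d k) := by
  have hm := congrArg (fun s => (Multiset.map f s).sum) (eig_multiset_diagonal d h)
  simp only [Multiset.map_map] at hm
  exact hm

lemma vNEntropy_diagonal {n : Type*} [Fintype n] [DecidableEq n] (d : n → ℝ) :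
    vNEntropy (Matrix.diagonal (fun i => (d i : ℝ) : n → ℂ)) = shannonH d := by
  have hH : (Matrix.diagonal (fun i => (d i : ℝ) : n → ℂ)).IsHermitian := by
    apply Matrix.isHermitian_diagonal_of_self_adjoint
    funext i
    simp [Pi.star_apply, Complex.conj_ofReal]
  rw [vNEntropy, dif_pos hH, shannonH]
  congr 1
  exact sum_f_eigenvalues_diagonal d hH (fun x => x * Real.logb 2 x)

lemma diagonal_sum' {n ι : Type*} [Fintype ι] [Fintype n] [DecidableEq n] (f : ι → n → ℂ) :
    ∑ i, Matrix.diagonal (f i) = Matrix.diagonal (fun x => ∑ i, f i x) := by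
  ext x y
  by_cases h : x = y <;> simp [Matrix.sum_apply, Matrix.diagonal_apply, h]

lemma smul_diagonal' {n : Type*} [DecidableEq n] (c : ℂ) (g : n → ℂ) :
    c • Matrix.diagonal g = Matrix.diagonal (fun x => c * g x) := by
  ext x y
  by_cases h : x = y <;> simp [Matrix.diagonal_apply, h]

lemma stdBasis_eq_diagonal' {n : Type*} [DecidableEq n] (b : n) :
    Matrix.single b b (1 : ℂ) = Matrix.diagonal (fun x => if x = b then 1 else 0) := by
  ext x y
  by_cases hx : x = b <;> by_cases hy : y = b <;>
    simp [Matrix.single, Matrix.diagonal_apply, hx, hy] <;> tauto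

/-- For a classical two-way channel, `Δχ_⇒(E) = I(A;B'|B)` (Section 3.4 of the paper):
the change in Bob's local Holevo information equals the conditional mutual information
`H(B'|B) − H(B'|A,B)` of the joint distribution `P(a,b,b') = p_{ab} m_{b'|ab}`. -/
theorem stmt9 {A B A' B' : Type}
    [Fintype A] [Nonempty A] [Fintype B] [DecidableEq B] [Nonempty B]
    [Fintype A'] [Nonempty A'] [Fintype B'] [DecidableEq B'] [Nonempty B']
    (p : A × B → ℝ) (hp : ∀ ab, 0 ≤ p ab) (hp1 : ∑ ab, p ab = 1)
    (q : A × B → A' × B' → ℝ) (hq : ∀ ab a'b', 0 ≤ q ab a'b')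
    (hq1 : ∀ ab, ∑ a'b', q ab a'b' = 1)
    (mq : A × B → B' → ℝ) (hmq : ∀ ab b', mq ab b' = ∑ a', q ab (a', b'))
    (P : (A × B) × B' → ℝ) (hP : ∀ ab b', P (ab, b') = p ab * mq ab b')
    (PB : B → ℝ) (hPB : ∀ b, PB b = ∑ a, ∑ b', P ((a, b), b'))
    (PBB' : B × B' → ℝ) (hPBB' : ∀ b b', PBB' (b, b') = ∑ a, P ((a, b), b'))
    (PAB : A × B → ℝ) (hPAB : ∀ ab, PAB ab = ∑ b', P (ab, b')) :
    holevo p (fun ab => (Matrix.single ab.2 ab.2 (1 : ℂ) : Matrix B B ℂ) ⊗ₖ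
        (∑ b', ((mq ab b' : ℝ) : ℂ) • Matrix.single b' b' (1 : ℂ)))
      - holevo p (fun ab => (Matrix.single ab.2 ab.2 (1 : ℂ) : Matrix B B ℂ))
      = (shannonH PBB' - shannonH PB) - (shannonH P - shannonH PAB) := by
  classical
  -- total mass of mq
  have hmq1 : ∀ ab, ∑ b', mq ab b' = 1 := by
    intro ab
    have := hq1 ab
    rw [Fintype.sum_prod_type_right] at this
    calc ∑ b', mq ab b' = ∑ b', ∑ a', q ab (a', b') := by
          exact Finset.sum_congr rfl fun b' _ => hmq ab b'
      _ = 1 := this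
  set g1 : A × B → B × B' → ℝ :=
    fun ab x => (if x.1 = ab.2 then 1 else 0) * mq ab x.2 with hg1
  set g2 : A × B → B → ℝ := fun ab x => if x = ab.2 then 1 else 0 with hg2
  -- matrix identifications
  have hρ2 : ∀ ab : A × B, (Matrix.single ab.2 ab.2 (1 : ℂ) : Matrix B B ℂ)
      = Matrix.diagonal (fun x => (g2 ab x : ℝ) : B → ℂ) := by
    intro ab
    rw [stdBasis_eq_diagonal']
    refine congrArg Matrix.diagonal ?_
    funext x
    by_cases h : x = ab.2 <;> simp [hg2, h]
  have hρ1 : ∀ ab : A × B, (Matrix.single ab.2 ab.2 (1 : ℂ) : Matrix B B ℂ) ⊗ₖ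
        (∑ b', ((mq ab b' : ℝ) : ℂ) • Matrix.single b' b' (1 : ℂ))
      = Matrix.diagonal (fun x => (g1 ab x : ℝ) : B × B' → ℂ) := by
    intro ab
    have hin : (∑ b', ((mq ab b' : ℝ) : ℂ) • Matrix.single b' b' (1 : ℂ))
        = Matrix.diagonal (fun x' : B' => ((mq ab x' : ℝ) : ℂ)) := by
      calc (∑ b', ((mq ab b' : ℝ) : ℂ) • Matrix.single b' b' (1 : ℂ))
          = ∑ b', Matrix.diagonal (fun x' : B' => ((mq ab b' : ℝ) : ℂ) * (if x' = b' then 1 else 0)) := by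
            refine Finset.sum_congr rfl fun b' _ => ?_
            rw [stdBasis_eq_diagonal', smul_diagonal']
        _ = Matrix.diagonal (fun x' : B' => ∑ b', ((mq ab b' : ℝ) : ℂ) * (if x' = b' then 1 else 0)) :=
            diagonal_sum' _
        _ = Matrix.diagonal (fun x' : B' => ((mq ab x' : ℝ) : ℂ)) := by
            refine congrArg Matrix.diagonal ?_
            funext x'
            simp
    rw [stdBasis_eq_diagonal', hin, Matrix.diagonal_kronecker_diagonal]
    refine congrArg Matrix.diagonal ?_
    funext x
    by_cases h : x.1 = ab.2 <;> simp [hg1, h]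
  -- averaged states
  have havg1 : (∑ ab, (p ab : ℂ) • Matrix.diagonal (fun x => (g1 ab x : ℝ) : B × B' → ℂ))
      = Matrix.diagonal (fun x => (PBB' x : ℝ) : B × B' → ℂ) := by
    simp only [smul_diagonal']
    rw [diagonal_sum']
    refine congrArg Matrix.diagonal ?_
    funext x
    have : ∑ ab, (p ab : ℂ) * ((g1 ab x : ℝ) : ℂ) = ((∑ ab, p ab * g1 ab x : ℝ) : ℂ) := by
      push_cast; rfl
    rw [this]
    congr 1
    rw [Fintype.sum_prod_type]
    have : ∀ a : A, ∑ b : B, p (a, b) * g1 (a, b) x = P ((a, x.1), x.2) := by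
      intro a
      rw [hP]
      simp [hg1, mul_ite, Finset.sum_ite_eq, mul_comm, mul_assoc]
    rw [Finset.sum_congr rfl fun a _ => this a]
    rw [show x = (x.1, x.2) from rfl] at *
    exact (hPBB' x.1 x.2).symm
  have havg2 : (∑ ab, (p ab : ℂ) • Matrix.diagonal (fun x => (g2 ab x : ℝ) : B → ℂ))
      = Matrix.diagonal (fun x => (PB x : ℝ) : B → ℂ) := by
    simp only [smul_diagonal']
    rw [diagonal_sum']
    refine congrArg Matrix.diagonal ?_
    funext x
    have : ∑ ab, (p ab : ℂ) * ((g2 ab x : ℝ) : ℂ) = ((∑ ab, p ab * g2 ab x : ℝ) : ℂ) := by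
      push_cast; rfl
    rw [this]
    congr 1
    rw [hPB, Fintype.sum_prod_type]
    refine Finset.sum_congr rfl fun a _ => ?_
    have : ∑ b' , P ((a, x), b') = p (a, x) := by
      have : ∀ b', P ((a, x), b') = p (a, x) * mq (a, x) b' := fun b' => hP (a, x) b'
      rw [Finset.sum_congr rfl fun b' _ => this b', ← Finset.mul_sum, hmq1, mul_one]
    rw [this]
    simp [hg2, mul_ite, Finset.sum_ite_eq]
  -- entropies of ensemble members
  have hS2 : ∀ ab : A × B, shannonH (g2 ab) = 0 := by
    intro ab
    rw [shannonH]
    have : ∀ x : B, g2 ab x * Real.logb 2 (g2 ab x) = 0 := by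
      intro x
      by_cases h : x = ab.2 <;> simp [hg2, h]
    rw [Finset.sum_congr rfl fun x _ => this x]
    simp
  have hS1 : ∀ ab : A × B, shannonH (g1 ab) = shannonH (mq ab) := by
    intro ab
    rw [shannonH, shannonH]
    congr 1
    rw [Fintype.sum_prod_type]
    have hterm : ∀ (x : B) (x' : B'), g1 ab (x, x') * Real.logb 2 (g1 ab (x, x'))
        = if x = ab.2 then mq ab x' * Real.logb 2 (mq ab x') else 0 := by
      intro x x'
      by_cases h : x = ab.2 <;> simp [hg1, h]
    calc ∑ x, ∑ x', g1 ab (x, x') * Real.logb 2 (g1 ab (x, x'))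
        = ∑ x, ∑ x', if x = ab.2 then mq ab x' * Real.logb 2 (mq ab x') else 0 :=
          Finset.sum_congr rfl fun x _ => Finset.sum_congr rfl fun x' _ => hterm x x'
      _ = ∑ x', mq ab x' * Real.logb 2 (mq ab x') := by
          rw [Finset.sum_comm]
          simp
  -- key Shannon identity
  have hPABp : PAB = p := by
    funext ab
    rw [hPAB]
    have : ∀ b', P (ab, b') = p ab * mq ab b' := fun b' => hP ab b'
    rw [Finset.sum_congr rfl fun b' _ => this b', ← Finset.mul_sum, hmq1, mul_one]
  have hkey : shannonH P - shannonH PAB = ∑ ab, p ab * shannonH (mq ab) := by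
    have hterm : ∀ (ab : A × B) (b' : B'),
        p ab * mq ab b' * Real.logb 2 (p ab * mq ab b')
          = p ab * (mq ab b' * Real.logb 2 (mq ab b')) + (p ab * Real.logb 2 (p ab)) * mq ab b' := by
      intro ab b'
      rcases eq_or_ne (p ab) 0 with h | h
      · simp [h]
      rcases eq_or_ne (mq ab b') 0 with h' | h'
      · simp [h']
      rw [Real.logb_mul h h']
      ring
    have hPsum : shannonH P
        = ∑ ab, p ab * shannonH (mq ab) + shannonH p := by
      rw [shannonH, Fintype.sum_prod_type]
      have : ∀ ab : A × B, ∑ b', P (ab, b') * Real.logb 2 (P (ab, b'))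
          = p ab * (∑ b', mq ab b' * Real.logb 2 (mq ab b')) + p ab * Real.logb 2 (p ab) := by
        intro ab
        calc ∑ b', P (ab, b') * Real.logb 2 (P (ab, b'))
            = ∑ b', (p ab * (mq ab b' * Real.logb 2 (mq ab b'))
                + (p ab * Real.logb 2 (p ab)) * mq ab b') := by
              refine Finset.sum_congr rfl fun b' _ => ?_
              rw [hP]
              exact hterm ab b'
          _ = p ab * (∑ b', mq ab b' * Real.logb 2 (mq ab b')) + p ab * Real.logb 2 (p ab) := by
              rw [Finset.sum_add_distrib, ← Finset.mul_sum, ← Finset.mul_sum, hmq1, mul_one]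
      rw [Finset.sum_congr rfl fun ab _ => this ab, Finset.sum_add_distrib]
      rw [shannonH]
      have : ∀ ab : A × B, p ab * shannonH (mq ab)
          = -(p ab * (∑ b', mq ab b' * Real.logb 2 (mq ab b'))) := by
        intro ab; rw [shannonH]; ring
      rw [Finset.sum_congr rfl fun ab _ => this ab]
      rw [Finset.sum_neg_distrib]
      ring
    rw [hPsum, hPABp]
    ring
  -- put everything together
  rw [holevo, holevo]
  simp only [hρ1]
  simp only [hρ2]
  rw [havg1, havg2, vNEntropy_diagonal, vNEntropy_diagonal]
  simp only [vNEntropy_diagonal, hS1, hS2, mul_zero]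
  rw [hkey]
  simp
  ring
end
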